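/- arXiv:1811.03876 — 2 statements merged into one kernel-verified Lean document; each statement's English description precedes it below -/
import Mathlib

section
/- Given a 2-representation ρ of a Lie 2-algebra with crossed module (μ : 𝔤 → 𝔥, L) on a 2-vector space φ : W → V, the map ρ̄ : 𝔤 ⊕_L 𝔥 → gl(W ⊕ V) sending (x,y) to the block upper-triangular operator (w,v) ↦ (ρ₀¹(y+μ(x))w + ρ₁(x)v, ρ₀⁰(y)v) is a Lie algebra homomorphism, i.e. an honest representation of the semi-direct sum Lie algebra on W ⊕ V. -/
attribute [local instance 100] LieRing.ofAssociativeRing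

/-- The block upper-triangular operator ρ̄_{(x,y)}(w,v) =
(ρ₀¹(y+μx)w + ρ₁(x)v, ρ₀⁰(y)v). -/
def rhoBar
    (K : Type*) [Field K]
    (g h W V : Type*) [LieRing g] [LieAlgebra K g] [LieRing h] [LieAlgebra K h]
    [AddCommGroup W] [Module K W] [AddCommGroup V] [Module K V]
    (μ : g →ₗ⁅K⁆ h)
    (ρ01 : h →ₗ⁅K⁆ Module.End K W) (ρ00 : h →ₗ⁅K⁆ Module.End K V)
    (ρ1 : g →ₗ[K] V →ₗ[K] W) (x : g) (y : h) (p : W × V) : W × V :=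
  (ρ01 (y + μ x) p.1 + ρ1 x p.2, ρ00 y p.2)

/-- Given a 2-representation of a Lie 2-algebra on a 2-vector space φ : W → V,
the map ρ̄ is an honest representation of the semi-direct sum 𝔤 ⊕_L 𝔥 on
W ⊕ V. -/
theorem rhoBar_isRepresentation
    (K : Type*) [Field K]
    (g h W V : Type*) [LieRing g] [LieAlgebra K g] [LieRing h] [LieAlgebra K h]
    [AddCommGroup W] [Module K W] [AddCommGroup V] [Module K V]
    (φ : W →ₗ[K] V)
    (μ : g →ₗ⁅K⁆ h) (L : h →ₗ⁅K⁆ Module.End K g)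
    (hder : ∀ (y : h) (x₁ x₂ : g), L y ⁅x₁, x₂⁆ = ⁅L y x₁, x₂⁆ + ⁅x₁, L y x₂⁆)
    (hequiv : ∀ (y : h) (x : g), μ (L y x) = ⁅y, μ x⁆)
    (hpeiffer : ∀ (x₀ x₁ : g), L (μ x₀) x₁ = ⁅x₀, x₁⁆)
    (ρ01 : h →ₗ⁅K⁆ Module.End K W) (ρ00 : h →ₗ⁅K⁆ Module.End K V)
    (ρ1 : g →ₗ[K] V →ₗ[K] W)
    (hcompat : ∀ y : h, φ ∘ₗ ρ01 y = ρ00 y ∘ₗ φ)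
    (hρ1br : ∀ x₀ x₁ : g,
      ρ1 ⁅x₀, x₁⁆ = ρ1 x₀ ∘ₗ (φ ∘ₗ ρ1 x₁) - ρ1 x₁ ∘ₗ (φ ∘ₗ ρ1 x₀))
    (h00μ : ∀ x : g, (ρ00 (μ x) : V →ₗ[K] V) = φ ∘ₗ ρ1 x)
    (h01μ : ∀ x : g, (ρ01 (μ x) : W →ₗ[K] W) = ρ1 x ∘ₗ φ)
    (hact : ∀ (y : h) (x : g),
      ρ1 (L y x) = ρ01 y ∘ₗ ρ1 x - ρ1 x ∘ₗ ρ00 y) :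
    ∀ (x₀ x₁ : g) (y₀ y₁ : h) (p : W × V),
      rhoBar K g h W V μ ρ01 ρ00 ρ1
          (⁅x₀, x₁⁆ + L y₀ x₁ - L y₁ x₀) ⁅y₀, y₁⁆ p =
        rhoBar K g h W V μ ρ01 ρ00 ρ1 x₀ y₀
            (rhoBar K g h W V μ ρ01 ρ00 ρ1 x₁ y₁ p) -
          rhoBar K g h W V μ ρ01 ρ00 ρ1 x₁ y₁
            (rhoBar K g h W V μ ρ01 ρ00 ρ1 x₀ y₀ p) := by
  intro x₀ x₁ y₀ y₁ ⟨w, v⟩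
  have hμbr : μ ⁅x₀, x₁⁆ = ⁅μ x₀, μ x₁⁆ := by rw [← hpeiffer, hequiv]
  have h01μ' : ∀ (x : g) (z : W), ρ01 (μ x) z = ρ1 x (φ z) := by
    intro x z
    have := congrFun (congrArg DFunLike.coe (h01μ x)) z
    simpa using this
  have hcompat' : ∀ (y : h) (z : W), φ (ρ01 y z) = ρ00 y (φ z) := by
    intro y z
    have := congrFun (congrArg DFunLike.coe (hcompat y)) z
    simpa using this
  have hact' : ∀ (y : h) (x : g) (u : V),
      ρ1 (L y x) u = ρ01 y (ρ1 x u) - ρ1 x (ρ00 y u) := by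
    intro y x u
    have := congrFun (congrArg DFunLike.coe (hact y x)) u
    simpa using this
  have hbr' : ρ1 ⁅x₀, x₁⁆ v = ρ1 x₀ (φ (ρ1 x₁ v)) - ρ1 x₁ (φ (ρ1 x₀ v)) := by
    have := congrFun (congrArg DFunLike.coe (hρ1br x₀ x₁)) v
    simpa using this
  have hsum : ⁅y₀, y₁⁆ + μ (⁅x₀, x₁⁆ + L y₀ x₁ - L y₁ x₀)
      = ⁅y₀ + μ x₀, y₁ + μ x₁⁆ := by
    rw [map_sub, map_add, hμbr, hequiv y₀ x₁, hequiv y₁ x₀, lie_add, add_lie, add_lie,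
      ← lie_skew y₁ (μ x₀)]
    abel
  unfold rhoBar
  refine Prod.ext ?_ ?_
  · simp only [Prod.fst_sub, Prod.fst_add, hsum, map_add, map_sub,
      LieHom.map_lie, Ring.lie_def, LinearMap.add_apply, LinearMap.sub_apply,
      Module.End.mul_apply, map_add, hbr', hact', h01μ', hcompat']
    abel
  · simp only [Prod.snd_sub, LieHom.map_lie, Ring.lie_def,
      LinearMap.sub_apply, Module.End.mul_apply]
end

section
/- The adjoint maps of a crossed module of Lie algebras (μ : 𝔤 → 𝔥, L), given by ad₁ : 𝔤 → Hom(𝔥, 𝔤), ad₁(x)(u) := −L_u x; ad₀¹ : 𝔥 → gl(𝔤), ad₀¹(y)(v) := L_y v; and ad₀⁰ : 𝔥 → gl(𝔥), ad₀⁰(y)(u) := [y,u], constitute a 2-representation of the Lie 2-algebra on the 2-vector space μ : 𝔤 → 𝔥 (forgetting the brackets). -/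
attribute [local instance 100] LieRing.ofAssociativeRing

/-- The adjoint maps ad₁(x)(u) = −L_u x, ad₀¹(y) = L_y, ad₀⁰(y) = ⁅y,·⁆ of a
crossed module of Lie algebras constitute a 2-representation on the 2-vector
space μ : 𝔤 → 𝔥. -/
theorem adjoint_is_two_representation
    (K : Type*) [Field K]
    (g h : Type*) [LieRing g] [LieAlgebra K g] [LieRing h] [LieAlgebra K h]
    (μ : g →ₗ⁅K⁆ h) (L : h →ₗ⁅K⁆ Module.End K g)
    (hder : ∀ (y : h) (x₁ x₂ : g), L y ⁅x₁, x₂⁆ = ⁅L y x₁, x₂⁆ + ⁅x₁, L y x₂⁆)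
    (hequiv : ∀ (y : h) (x : g), μ (L y x) = ⁅y, μ x⁆)
    (hpeiffer : ∀ (x₀ x₁ : g), L (μ x₀) x₁ = ⁅x₀, x₁⁆) :
    -- ρ₀¹ = L is a Lie algebra homomorphism
    (∀ (y₀ y₁ : h) (v : g),
      L ⁅y₀, y₁⁆ v = L y₀ (L y₁ v) - L y₁ (L y₀ v)) ∧
    -- ρ₀⁰ = ad is a Lie algebra homomorphism
    (∀ (y₀ y₁ : h) (u : h),
      ⁅(⁅y₀, y₁⁆ : h), u⁆ = ⁅y₀, ⁅y₁, u⁆⁆ - ⁅y₁, ⁅y₀, u⁆⁆) ∧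
    -- φ ∘ ρ₀¹(y) = ρ₀⁰(y) ∘ φ, with φ = μ
    (∀ (y : h) (v : g), μ (L y v) = ⁅y, μ v⁆) ∧
    -- ρ₁(x) = (u ↦ −L_u x) is a Lie homomorphism for [A,B]_φ = AφB − BφA
    (∀ (x₀ x₁ : g) (u : h),
      -(L u ⁅x₀, x₁⁆) = -(L (μ (-(L u x₁))) x₀) + L (μ (-(L u x₀))) x₁) ∧
    -- ρ₀⁰(μ(x)) = φ ∘ ρ₁(x)
    (∀ (x : g) (u : h), ⁅μ x, u⁆ = μ (-(L u x))) ∧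
    -- ρ₀¹(μ(x)) = ρ₁(x) ∘ φ
    (∀ (x : g) (v : g), L (μ x) v = -(L (μ v) x)) ∧
    -- ρ₁(L_y x) = ρ₀¹(y)ρ₁(x) − ρ₁(x)ρ₀⁰(y)
    (∀ (y : h) (x : g) (u : h),
      -(L u (L y x)) = L y (-(L u x)) - -(L ⁅y, u⁆ x)) := by
  refine ⟨?_, ?_, hequiv, ?_, ?_, ?_, ?_⟩
  · intro y₀ y₁ v
    rw [LieHom.map_lie]; simp [Module.End.lie_apply]
  · intro y₀ y₁ u
    rw [lie_lie]
  · intro x₀ x₁ u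
    rw [hder, hpeiffer, hpeiffer]
    have : ⁅(L u) x₁, x₀⁆ = -⁅x₀, (L u) x₁⁆ := (lie_skew _ _).symm
    simp only [neg_lie, lie_neg, this]
    abel
  · intro x u
    rw [map_neg, hequiv, lie_skew]
  · intro x v
    rw [hpeiffer, hpeiffer, lie_skew]
  · intro y x u
    have : (L ⁅y, u⁆) x = (L y) ((L u) x) - (L u) ((L y) x) := by
      rw [L.map_lie]; simp [Module.End.lie_apply]
    rw [this, map_neg]; abel
end
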